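/- Let n, m and m' be nonnegative integers such that n+m and n+m' are both even and m ≥ m'. Then the partisan chocolate game position PC(n,m) is greater than or equal to PC(n,m') in the normal-play game order (i.e., PC(n,m) − PC(n,m') is a second-player win or a win for Left). -/

import Mathlib

universe u

namespace SetTheory

/-- Pre-games (removed from Mathlib; restored here with their Dec 2024 meaning). -/
inductive PGame : Type (u + 1)
  | mk : ∀ α β : Type u, (α → PGame) → (β → PGame) → PGame

namespace PGame

/-- Simultaneous definition of `≤` (first component) and `⧏` (second component),
as in the older Mathlib. -/
noncomputable def leLF (x : PGame.{u}) : PGame.{u} → Prop × Prop :=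
  PGame.rec (motive := fun _ => PGame.{u} → Prop × Prop)
    (fun xl xr xL xR IHl IHr y =>
      PGame.rec (motive := fun _ => Prop × Prop)
        (fun yl yr yL yR JHl JHr =>
          ((∀ i, (IHl i (mk yl yr yL yR)).2) ∧ ∀ j, (JHr j).2,
            (∃ i, (JHl i).1) ∨ ∃ j, (IHr j (mk yl yr yL yR)).1)) y) x

noncomputable instance : LE PGame.{u} :=
  ⟨fun x y => (leLF x y).1⟩

end PGame

end SetTheory

open SetTheory

namespace SetTheory.PGame

def LF (x y : PGame.{u}) : Prop := (leLF x y).2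

theorem mk_le_mk {xl xr : Type u} {xL : xl → PGame.{u}} {xR : xr → PGame.{u}}
    {yl yr : Type u} {yL : yl → PGame.{u}} {yR : yr → PGame.{u}} :
    mk xl xr xL xR ≤ mk yl yr yL yR ↔
      (∀ i, LF (xL i) (mk yl yr yL yR)) ∧ ∀ j, LF (mk xl xr xL xR) (yR j) := Iff.rfl

theorem mk_lf_mk {xl xr : Type u} {xL : xl → PGame.{u}} {xR : xr → PGame.{u}}
    {yl yr : Type u} {yL : yl → PGame.{u}} {yR : yr → PGame.{u}} :
    LF (mk xl xr xL xR) (mk yl yr yL yR) ↔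
      (∃ i, mk xl xr xL xR ≤ yL i) ∨ ∃ j, xR j ≤ mk yl yr yL yR := Iff.rfl

theorem not_le_aux (x : PGame.{u}) : ∀ y : PGame.{u}, (¬ x ≤ y ↔ LF y x) ∧ (¬ y ≤ x ↔ LF x y) := by
  induction x with
  | mk xl xr xL xR IHl IHr =>
    intro y
    induction y with
    | mk yl yr yL yR JHl JHr =>
      have h1 : ∀ i, ¬ LF (xL i) (mk yl yr yL yR) ↔ mk yl yr yL yR ≤ xL i := fun i => by
        rw [← (IHl i (mk yl yr yL yR)).2, not_not]
      have h2 : ∀ j, ¬ LF (mk xl xr xL xR) (yR j) ↔ yR j ≤ mk xl xr xL xR := fun j => by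
        rw [← (JHr j).2, not_not]
      have h3 : ∀ i, ¬ LF (yL i) (mk xl xr xL xR) ↔ mk xl xr xL xR ≤ yL i := fun i => by
        rw [← (JHl i).1, not_not]
      have h4 : ∀ j, ¬ LF (mk yl yr yL yR) (xR j) ↔ xR j ≤ mk yl yr yL yR := fun j => by
        rw [← (IHr j (mk yl yr yL yR)).1, not_not]
      rw [mk_le_mk, mk_le_mk, mk_lf_mk, mk_lf_mk]
      simp only [not_and_or, not_forall, h1, h2, h3, h4, and_self]

theorem not_le {x y : PGame.{u}} : ¬ x ≤ y ↔ LF y x := (not_le_aux x y).1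

end SetTheory.PGame

/-- The partisan chocolate game position `PC n m`.
Left options: `PC n' m` with `n' < n` and `n' + m` even, and `PC n m'` with `m' < m` and
`n + m'` even. Right options: the same with "odd" in place of "even". -/
def PC : ℕ → ℕ → SetTheory.PGame
  | n, m =>
    SetTheory.PGame.mk
      {p : ℕ × ℕ // (p.2 = m ∧ p.1 < n ∧ Even (p.1 + m)) ∨ (p.1 = n ∧ p.2 < m ∧ Even (n + p.2))}
      {p : ℕ × ℕ // (p.2 = m ∧ p.1 < n ∧ Odd (p.1 + m)) ∨ (p.1 = n ∧ p.2 < m ∧ Odd (n + p.2))}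
      (fun p => PC p.1.1 p.1.2)
      (fun p => PC p.1.1 p.1.2)
termination_by n m => n + m
decreasing_by
  all_goals rcases p.2 with ⟨h1, h2, -⟩ | ⟨h1, h2, -⟩ <;> omega

def PCcond (a b c d : ℕ) : Prop :=
  ((a + b) % 2 = 0 → (c + d) % 2 = 0 → a + b + 2 * (c % 2) ≤ c + d + 2 * (a % 2)) ∧
  ((a + b) % 2 = 1 → (c + d) % 2 = 1 ∧ c + d ≤ a + b)

theorem pc_le_iff_aux (a b c d : ℕ) :
    PC a b ≤ PC c d ↔
      (∀ x y : ℕ, ((y = b ∧ x < a ∧ Even (x + b)) ∨ (x = a ∧ y < b ∧ Even (a + y))) →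
        ¬ PC c d ≤ PC x y) ∧
      (∀ x y : ℕ, ((y = d ∧ x < c ∧ Odd (x + d)) ∨ (x = c ∧ y < d ∧ Odd (c + y))) →
        ¬ PC x y ≤ PC a b) := by
  conv_lhs => rw [PC, PC]
  rw [PGame.mk_le_mk]
  simp only [← PGame.not_le]
  rw [← PC, ← PC]
  constructor
  · rintro ⟨h1, h2⟩
    exact ⟨fun x y hxy => h1 ⟨(x, y), hxy⟩, fun x y hxy => h2 ⟨(x, y), hxy⟩⟩
  · rintro ⟨h1, h2⟩
    exact ⟨fun i => h1 i.1.1 i.1.2 i.2, fun j => h2 j.1.1 j.1.2 j.2⟩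

theorem pc_cond_iff (a b c d : ℕ) :
    PCcond a b c d ↔
      (∀ x y : ℕ, ((y = b ∧ x < a ∧ Even (x + b)) ∨ (x = a ∧ y < b ∧ Even (a + y))) →
        ¬ PCcond c d x y) ∧
      (∀ x y : ℕ, ((y = d ∧ x < c ∧ Odd (x + d)) ∨ (x = c ∧ y < d ∧ Odd (c + y))) →
        ¬ PCcond x y a b) := by
  simp only [PCcond, Nat.even_iff, Nat.odd_iff]
  rcases Nat.even_or_odd (a + b) with hab | hab <;>
    rcases Nat.even_or_odd (c + d) with hcd | hcd <;>
      simp only [Nat.even_iff, Nat.odd_iff] at hab hcd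
  -- Case EE
  · constructor
    · intro hc
      refine ⟨fun x y hxy => ?_, fun x y hxy => ?_⟩ <;> omega
    · rintro ⟨h1, h2⟩
      by_contra hno
      have key : ¬ (a + b + 2 * (c % 2) ≤ c + d + 2 * (a % 2)) := by omega
      have hab2 : 2 ≤ a ∨ 2 ≤ b := by omega
      rcases hab2 with ha | hb
      · have := h1 (a - 2) b (Or.inl ⟨rfl, by omega, by omega⟩)
        omega
      · have := h1 a (b - 2) (Or.inr ⟨rfl, by omega, by omega⟩)
        omega
  -- Case EO
  · constructor
    · intro hc
      refine ⟨fun x y hxy => ?_, fun x y hxy => ?_⟩ <;> omega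
    · intro _; omega
  -- Case OE
  · constructor
    · intro hc; omega
    · rintro ⟨h1, h2⟩
      exfalso
      have hTS : a + b < c + d := by
        rcases Nat.even_or_odd a with ha | ha
        · rw [Nat.even_iff] at ha
          have := h1 a (b - 1) (Or.inr ⟨rfl, by omega, by omega⟩)
          omega
        · rw [Nat.odd_iff] at ha
          have := h1 (a - 1) b (Or.inl ⟨rfl, by omega, by omega⟩)
          omega
      rcases (by omega : 1 ≤ c ∨ 1 ≤ d) with hc1 | hd1
      · have := h2 (c - 1) d (Or.inl ⟨rfl, by omega, by omega⟩)
        omega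
      · have := h2 c (d - 1) (Or.inr ⟨rfl, by omega, by omega⟩)
        omega
  -- Case OO
  · constructor
    · intro hc
      refine ⟨fun x y hxy => ?_, fun x y hxy => ?_⟩ <;> omega
    · rintro ⟨h1, h2⟩
      refine ⟨by omega, fun _ => ⟨hcd, ?_⟩⟩
      by_contra hno
      rcases (by omega : 2 ≤ c ∨ 2 ≤ d) with hc2 | hd2
      · have := h2 (c - 2) d (Or.inl ⟨rfl, by omega, by omega⟩)
        omega
      · have := h2 c (d - 2) (Or.inr ⟨rfl, by omega, by omega⟩)
        omega

theorem pc_le_iff : ∀ (k a b c d : ℕ), a + b + c + d = k → (PC a b ≤ PC c d ↔ PCcond a b c d) := by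
  intro k
  induction k using Nat.strong_induction_on with
  | _ k IH =>
    intro a b c d hk
    rw [pc_le_iff_aux, pc_cond_iff]
    constructor
    · rintro ⟨h1, h2⟩
      refine ⟨fun x y hxy hc => h1 x y hxy ?_, fun x y hxy hc => h2 x y hxy ?_⟩
      · refine (IH (c + d + x + y) (by rcases hxy with ⟨h, h', -⟩ | ⟨h, h', -⟩ <;> omega)
          c d x y rfl).mpr hc
      · refine (IH (x + y + a + b) (by rcases hxy with ⟨h, h', -⟩ | ⟨h, h', -⟩ <;> omega)
          x y a b rfl).mpr hc
    · rintro ⟨h1, h2⟩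
      refine ⟨fun x y hxy hc => h1 x y hxy ?_, fun x y hxy hc => h2 x y hxy ?_⟩
      · refine (IH (c + d + x + y) (by rcases hxy with ⟨h, h', -⟩ | ⟨h, h', -⟩ <;> omega)
          c d x y rfl).mp hc
      · refine (IH (x + y + a + b) (by rcases hxy with ⟨h, h', -⟩ | ⟨h, h', -⟩ <;> omega)
          x y a b rfl).mp hc

theorem stmt_0 (n m m' : ℕ) (hm : Even (n + m)) (hm' : Even (n + m')) (h : m' ≤ m) :
    PC n m' ≤ PC n m := by
  rw [pc_le_iff (n + m' + n + m) n m' n m rfl]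
  rw [Nat.even_iff] at hm hm'
  constructor <;> omega
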